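/- Let O be an open subset of ℝ^d, let 𝒜 be a real Banach space, and let u : O → 𝒜 be analytic on O. Then for every compact set K ⊂ O there exists A₁ > 0 such that for every multi-index α ∈ ℕ^d and every x ∈ K, ‖(∂^α u)(x)‖_𝒜 ≤ A₁^{|α|+1} · (α!). -/

import Mathlib

open scoped Nat

/-- Partial derivative in the `j`-th coordinate direction. -/
noncomputable def pd {d : ℕ} {A : Type*} [NormedAddCommGroup A] [NormedSpace ℝ A]
    (j : Fin d) (f : EuclideanSpace ℝ (Fin d) → A) : EuclideanSpace ℝ (Fin d) → A :=
  fun y => fderiv ℝ f y (EuclideanSpace.single j 1)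

/-- Iterated partial derivative `∂^α = ∂₁^{α₁} ⋯ ∂_d^{α_d}`. -/
noncomputable def mpd {d : ℕ} {A : Type*} [NormedAddCommGroup A] [NormedSpace ℝ A]
    (α : Fin d → ℕ) (f : EuclideanSpace ℝ (Fin d) → A) : EuclideanSpace ℝ (Fin d) → A :=
  (List.finRange d).foldr (fun j g => (pd j)^[α j] g) f

namespace Stmt8Aux

open scoped ENNReal NNReal

theorem choose_le_two_pow (n k : ℕ) : n.choose k ≤ 2 ^ n := by
  rcases le_or_gt k n with hk | hk
  · calc n.choose k ≤ ∑ m ∈ Finset.range (n + 1), n.choose m :=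
        Finset.single_le_sum (fun _ _ => Nat.zero_le _) (Finset.mem_range.2 (Nat.lt_succ_of_le hk))
      _ = 2 ^ n := Nat.sum_range_choose n
  · rw [Nat.choose_eq_zero_of_lt hk]; exact Nat.zero_le _

theorem descFactorial_le (n k : ℕ) :
    (n + k).descFactorial k ≤ 2 ^ (n + k) * k ! := by
  rw [Nat.descFactorial_eq_factorial_mul_choose, mul_comm]
  exact Nat.mul_le_mul_right _ (choose_le_two_pow _ _)

theorem factorial_sum_le {ι : Type*} (s : Finset ι) (α : ι → ℕ) :
    (∑ i ∈ s, α i)! ≤ s.card ^ (∑ i ∈ s, α i) * ∏ i ∈ s, (α i)! := by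
  classical
  induction s using Finset.induction_on with
  | empty => simp
  | @insert a s ha ih =>
    rw [Finset.sum_insert ha, Finset.prod_insert ha, Finset.card_insert_of_notMem ha]
    set S := ∑ i ∈ s, α i with hS
    set c := s.card with hc
    have h1 : (α a + S)! = (α a + S).choose (α a) * (α a)! * S ! := by
      have := Nat.choose_mul_factorial_mul_factorial (Nat.le_add_right (α a) S)
      rw [Nat.add_sub_cancel_left] at this
      omega
    have h2 : (α a + S).choose (α a) * c ^ S ≤ (c + 1) ^ (α a + S) := by
      have hsymm : (α a + S).choose S = (α a + S).choose (α a) := by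
        have := Nat.choose_symm (Nat.le_add_right (α a) S)
        rwa [Nat.add_sub_cancel_left] at this
      rw [← hsymm]
      have hmem : S ∈ Finset.range (α a + S + 1) := Finset.mem_range.2 (by omega)
      calc (α a + S).choose S * c ^ S
          = c ^ S * 1 ^ (α a + S - S) * (α a + S).choose S := by
            rw [one_pow, mul_one, mul_comm]
        _ ≤ ∑ m ∈ Finset.range (α a + S + 1),
              c ^ m * 1 ^ (α a + S - m) * (α a + S).choose m :=
            Finset.single_le_sum (f := fun m => c ^ m * 1 ^ (α a + S - m) * (α a + S).choose m)
              (fun _ _ => Nat.zero_le _) hmem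
        _ = (c + 1) ^ (α a + S) := (add_pow c 1 (α a + S)).symm
    calc (α a + S)! = (α a + S).choose (α a) * (α a)! * S ! := h1
      _ ≤ (α a + S).choose (α a) * (α a)! * (c ^ S * ∏ i ∈ s, (α i)!) :=
          Nat.mul_le_mul_left _ ih
      _ = ((α a + S).choose (α a) * c ^ S) * ((α a)! * ∏ i ∈ s, (α i)!) := by ring
      _ ≤ (c + 1) ^ (α a + S) * ((α a)! * ∏ i ∈ s, (α i)!) := Nat.mul_le_mul_right _ h2

variable {d : ℕ} {A : Type*} [NormedAddCommGroup A] [NormedSpace ℝ A]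

theorem foldr_replicate (n : ℕ) (j : Fin d) (g : EuclideanSpace ℝ (Fin d) → A) :
    (List.replicate n j).foldr (fun j f => pd j f) g = (pd j)^[n] g := by
  induction n with
  | zero => rfl
  | succ n ih =>
    rw [List.replicate_succ, List.foldr_cons, ih, Function.iterate_succ_apply']

theorem foldr_flatMap (l : List (Fin d)) (α : Fin d → ℕ) (g : EuclideanSpace ℝ (Fin d) → A) :
    l.foldr (fun j f => (pd j)^[α j] f) g
      = (l.flatMap (fun j => List.replicate (α j) j)).foldr (fun j f => pd j f) g := by
  induction l with
  | nil => rfl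
  | cons j l ih =>
    rw [List.flatMap_cons, List.foldr_append, List.foldr_cons, ih, foldr_replicate]

theorem mpd_eq_foldr (α : Fin d → ℕ) (f : EuclideanSpace ℝ (Fin d) → A) :
    mpd α f = ((List.finRange d).flatMap (fun j => List.replicate (α j) j)).foldr
      (fun j g => pd j g) f :=
  foldr_flatMap _ α f

theorem length_flat (α : Fin d → ℕ) :
    ((List.finRange d).flatMap (fun j => List.replicate (α j) j)).length = ∑ i, α i := by
  rw [List.length_flatMap]
  rw [Fin.sum_univ_def]
  congr 1
  apply List.map_congr_left
  intro j _
  simp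

theorem norm_derivSeries_le
    (P : FormalMultilinearSeries ℝ (EuclideanSpace ℝ (Fin d)) A) (n : ℕ) :
    ‖P.derivSeries n‖ ≤ (n + 1) * ‖P (n + 1)‖ := by
  have h1 : ‖P.derivSeries n‖ ≤ 1 * ‖P.changeOriginSeries 1 n‖ := by
    refine (ContinuousLinearMap.norm_compContinuousMultilinearMap_le _ _).trans
      (mul_le_mul_of_nonneg_right ?_ (norm_nonneg _))
    exact ContinuousLinearMap.opNorm_le_bound _ zero_le_one (by simp)
  rw [one_mul] at h1
  refine h1.trans ?_
  have h2 : ‖P.changeOriginSeries 1 n‖ ≤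
      ∑ s : { s : Finset (Fin (1 + n)) // s.card = n }, ‖P (1 + n)‖ := by
    rw [FormalMultilinearSeries.changeOriginSeries]
    refine le_trans
      (norm_sum_le (Finset.univ : Finset { s : Finset (Fin (1 + n)) // s.card = n })
        (fun s => P.changeOriginSeriesTerm 1 n s.1 s.2)) (le_of_eq ?_)
    refine Finset.sum_congr rfl fun s _ => ?_
    exact P.norm_changeOriginSeriesTerm 1 n s.1 s.2
  refine h2.trans (le_of_eq ?_)
  rw [Finset.sum_const, Finset.card_univ, Fintype.card_finset_len, nsmul_eq_mul]
  norm_num [Fintype.card_fin]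
  rw [add_comm 1 n, Nat.choose_succ_self_right]
  norm_num

variable [CompleteSpace A]

theorem foldr_pd_series {x₀ : EuclideanSpace ℝ (Fin d)} {r : ℝ≥0∞} :
    ∀ (L : List (Fin d)) {g : EuclideanSpace ℝ (Fin d) → A}
      {P : FormalMultilinearSeries ℝ (EuclideanSpace ℝ (Fin d)) A},
      HasFPowerSeriesOnBall g P x₀ r →
      ∃ Q : FormalMultilinearSeries ℝ (EuclideanSpace ℝ (Fin d)) A,
        HasFPowerSeriesOnBall (L.foldr (fun j f => pd j f) g) Q x₀ r ∧
        ∀ n, ‖Q n‖ ≤ ((n + L.length).descFactorial L.length : ℝ) * ‖P (n + L.length)‖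
  | [], g, P, h => ⟨P, h, fun n => by simp⟩
  | j :: L, g, P, h => by
    obtain ⟨Q, hQ, hb⟩ := foldr_pd_series L h
    set ev : (EuclideanSpace ℝ (Fin d) →L[ℝ] A) →L[ℝ] A :=
      ContinuousLinearMap.apply ℝ A (EuclideanSpace.single j 1) with hev
    have hevn : ‖ev‖ ≤ 1 := by
      refine ContinuousLinearMap.opNorm_le_bound _ zero_le_one fun L' => ?_
      simpa [hev, mul_comm, EuclideanSpace.norm_single] using L'.le_opNorm
        (EuclideanSpace.single j (1 : ℝ))
    refine ⟨ev.compFormalMultilinearSeries Q.derivSeries, ?_, ?_⟩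
    · exact ev.comp_hasFPowerSeriesOnBall hQ.fderiv
    · intro n
      have step1 : ‖ev.compFormalMultilinearSeries Q.derivSeries n‖ ≤ ‖Q.derivSeries n‖ := by
        refine (ContinuousLinearMap.norm_compContinuousMultilinearMap_le _ _).trans ?_
        simpa using mul_le_mul_of_nonneg_right hevn (norm_nonneg _)
      have step2 : ‖Q.derivSeries n‖ ≤ (n + 1) * ‖Q (n + 1)‖ := norm_derivSeries_le Q n
      have step3 : ‖Q (n + 1)‖ ≤ ((n + 1 + L.length).descFactorial L.length : ℝ)
          * ‖P (n + 1 + L.length)‖ := hb (n + 1)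
      have hnat : (n + (j :: L).length).descFactorial ((j :: L).length)
          = (n + 1) * ((n + 1 + L.length).descFactorial L.length) := by
        simp only [List.length_cons]
        rw [show n + (L.length + 1) = (n + 1 + L.length) by omega]
        rw [Nat.descFactorial_succ]
        congr 1
        omega
      have hidx : n + (j :: L).length = n + 1 + L.length := by
        simp only [List.length_cons]; omega
      rw [hnat, hidx]
      push_cast
      calc ‖ev.compFormalMultilinearSeries Q.derivSeries n‖
          ≤ (n + 1) * ‖Q (n + 1)‖ := step1.trans step2
        _ ≤ (n + 1) * (((n + 1 + L.length).descFactorial L.length : ℝ)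
              * ‖P (n + 1 + L.length)‖) := by
            refine mul_le_mul_of_nonneg_left step3 (by positivity)
        _ = (n + 1) * ((n + 1 + L.length).descFactorial L.length : ℝ)
              * ‖P (n + 1 + L.length)‖ := by ring

theorem foldr_pd_bound {u : EuclideanSpace ℝ (Fin d) → A}
    {p : FormalMultilinearSeries ℝ (EuclideanSpace ℝ (Fin d)) A}
    {x₀ : EuclideanSpace ℝ (Fin d)} {ρ : ℝ≥0} (hρ : 0 < ρ)
    (h : HasFPowerSeriesOnBall u p x₀ ρ) {C : ℝ} (hC : 0 < C)
    (hp : ∀ n, ‖p n‖ * (ρ : ℝ) ^ n ≤ C) (L : List (Fin d))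
    {x : EuclideanSpace ℝ (Fin d)} (hx : ‖x - x₀‖ < ρ / 4) :
    ‖(L.foldr (fun j f => pd j f) u) x‖
      ≤ 2 * C * (2 / ρ) ^ L.length * (L.length)! := by
  obtain ⟨Q, hQ, hb⟩ := foldr_pd_series L h
  set k := L.length with hk
  set z := x - x₀ with hzdef
  have hρR : (0 : ℝ) < ρ := hρ
  have hz4 : ‖z‖ < (ρ : ℝ) / 4 := hx
  have hzmem : z ∈ Metric.eball (0 : EuclideanSpace ℝ (Fin d)) (ρ : ℝ≥0∞) := by
    rw [EMetric.mem_ball, edist_zero_right, enorm_eq_nnnorm]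
    exact_mod_cast (show (‖z‖₊ : ℝ) < (ρ : ℝ) from hz4.trans_le (by linarith))
  have hsum := hQ.hasSum hzmem
  have hxx : x₀ + z = x := by rw [hzdef]; abel
  rw [hxx] at hsum
  have hM : HasSum (fun n : ℕ => (2 ^ k * (k ! : ℝ) * C / (ρ : ℝ) ^ k) * (1 / 2) ^ n)
      ((2 ^ k * (k ! : ℝ) * C / (ρ : ℝ) ^ k) * 2) := by
    have hg := hasSum_geometric_of_lt_one (by norm_num : (0:ℝ) ≤ 1/2) (by norm_num : (1:ℝ)/2 < 1)
    have : (1 - 1/2 : ℝ)⁻¹ = 2 := by norm_num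
    rw [this] at hg
    exact hg.mul_left _
  have hbound : ∀ n : ℕ, ‖Q n fun _ => z‖
      ≤ (2 ^ k * (k ! : ℝ) * C / (ρ : ℝ) ^ k) * (1 / 2) ^ n := by
    intro n
    have h1 : ‖Q n fun _ => z‖ ≤ ‖Q n‖ * ‖z‖ ^ n := by
      refine ((Q n).le_opNorm _).trans (le_of_eq ?_)
      congr 1
      simp [Finset.prod_const]
    have h2 : ‖Q n‖ ≤ (2 ^ (n + k) * (k ! : ℝ)) * ‖p (n + k)‖ := by
      refine (hb n).trans (mul_le_mul_of_nonneg_right ?_ (norm_nonneg _))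
      exact_mod_cast Nat.cast_le.2 (descFactorial_le n k)
    have h3 : ‖p (n + k)‖ ≤ C / (ρ : ℝ) ^ (n + k) := by
      rw [le_div_iff₀ (by positivity)]
      exact hp (n + k)
    have h4 : ‖z‖ ^ n ≤ ((ρ : ℝ) / 4) ^ n := pow_le_pow_left₀ (norm_nonneg z) hz4.le n
    calc ‖Q n fun _ => z‖ ≤ ‖Q n‖ * ‖z‖ ^ n := h1
      _ ≤ ((2 ^ (n + k) * (k ! : ℝ)) * (C / (ρ : ℝ) ^ (n + k))) * ((ρ : ℝ) / 4) ^ n := by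
          refine mul_le_mul (h2.trans (mul_le_mul_of_nonneg_left h3 (by positivity))) h4
            (by positivity) (by positivity)
      _ = (2 ^ k * (k ! : ℝ) * C / (ρ : ℝ) ^ k) * (1 / 2) ^ n := by
          field_simp
          rw [div_pow, show (4:ℝ)^n = 2^n*2^n by rw [← mul_pow]; norm_num, pow_add, pow_add, one_div_pow]
          field_simp
  have := hsum.norm_le_of_bounded hM hbound
  refine this.trans (le_of_eq ?_)
  rw [div_pow]
  field_simp

end Stmt8Aux

/-- If `u : O → 𝒜` is real-analytic on the open set `O ⊆ ℝ^d`, then on every compact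
`K ⊆ O` the derivatives satisfy `‖∂^α u(x)‖ ≤ A₁^(|α|+1) · α!` for some `A₁ > 0`. -/
theorem stmt_8 {d : ℕ} {A : Type*} [NormedAddCommGroup A] [NormedSpace ℝ A]
    [CompleteSpace A] {O : Set (EuclideanSpace ℝ (Fin d))} (hO : IsOpen O)
    {u : EuclideanSpace ℝ (Fin d) → A} (hu : AnalyticOnNhd ℝ u O)
    {K : Set (EuclideanSpace ℝ (Fin d))} (hK : IsCompact K) (hKO : K ⊆ O) :
    ∃ A₁ > (0 : ℝ), ∀ (α : Fin d → ℕ) (x : EuclideanSpace ℝ (Fin d)), x ∈ K →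
      ‖mpd α u x‖ ≤ A₁ ^ (∑ i, α i + 1) * ∏ i, ((α i)! : ℝ) := by
  classical
  have pointwise : ∀ x ∈ K, ∃ ε B : ℝ, 0 < ε ∧ 1 ≤ B ∧
      ∀ (L : List (Fin d)) (y : EuclideanSpace ℝ (Fin d)), ‖y - x‖ < ε →
        ‖(L.foldr (fun j f => pd j f) u) y‖ ≤ B ^ (L.length + 1) * (L.length)! := by
    intro x hx
    obtain ⟨p, r, hp⟩ := hu x (hKO hx)
    obtain ⟨ρ, hρ0, hρr⟩ := ENNReal.lt_iff_exists_nnreal_btwn.1 hp.r_pos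
    have hρ : 0 < ρ := by exact_mod_cast hρ0
    have hball : HasFPowerSeriesOnBall u p x ρ := hp.mono (by exact_mod_cast hρ0) hρr.le
    obtain ⟨C, hC0, hPC⟩ := p.norm_mul_pow_le_of_lt_radius (hρr.trans_le hp.r_le)
    have hρR : (0 : ℝ) < ρ := hρ
    refine ⟨(ρ : ℝ) / 4, max (2 * C) (max (2 / ρ) 1), by positivity,
      le_max_of_le_right (le_max_right _ _), ?_⟩
    intro L y hy
    set B : ℝ := max (2 * C) (max (2 / ρ) 1) with hB
    have key := Stmt8Aux.foldr_pd_bound hρ hball hC0 hPC L hy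
    refine key.trans ?_
    have h1 : 2 * C ≤ B := le_max_left _ _
    have h2 : (2 / (ρ:ℝ)) ≤ B := le_max_of_le_right (le_max_left _ _)
    have hB0 : (0:ℝ) ≤ B := le_trans zero_le_one (le_max_of_le_right (le_max_right _ _))
    calc 2 * C * (2 / (ρ:ℝ)) ^ L.length * (L.length)!
        ≤ B * B ^ L.length * (L.length)! := by
          refine mul_le_mul_of_nonneg_right ?_ (by positivity)
          exact mul_le_mul h1 (pow_le_pow_left₀ (by positivity) h2 _) (by positivity) hB0
      _ = B ^ (L.length + 1) * (L.length)! := by ring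
  choose! ε B hε hB hP using pointwise
  obtain ⟨t, htK, hcov⟩ := hK.elim_nhds_subcover (fun x => Metric.ball x (ε x))
    (fun x hx => Metric.ball_mem_nhds x (hε x hx))
  set M : ℝ := 1 + ∑ x ∈ t, B x with hM
  have hsum_nonneg : (0:ℝ) ≤ ∑ x ∈ t, B x :=
    Finset.sum_nonneg fun x hx => le_trans zero_le_one (hB x (htK x hx))
  have hM1 : 1 ≤ M := by simp only [hM]; linarith
  have hBM : ∀ x ∈ t, B x ≤ M := by
    intro x hx
    have : B x ≤ ∑ y ∈ t, B y :=
      Finset.single_le_sum (fun y hy => le_trans zero_le_one (hB y (htK y hy))) hx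
    simp only [hM]; linarith
  refine ⟨(d + 1) * M, by positivity, ?_⟩
  intro α x hxK
  obtain ⟨x₀, hx₀t, hxball⟩ := Set.mem_iUnion₂.1 (hcov hxK)
  set k := ∑ i, α i with hkdef
  set L := (List.finRange d).flatMap (fun j => List.replicate (α j) j) with hL
  have hlen : L.length = k := Stmt8Aux.length_flat α
  have hyx : ‖x - x₀‖ < ε x₀ := by
    rw [← dist_eq_norm]
    exact Metric.mem_ball.1 hxball
  have hmain := hP x₀ (htK x₀ hx₀t) L x hyx
  rw [hlen] at hmain
  rw [Stmt8Aux.mpd_eq_foldr, ← hL]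
  refine hmain.trans ?_
  have hfact : ((k)! : ℝ) ≤ (d:ℝ) ^ k * ∏ i, ((α i)! : ℝ) := by
    have := Stmt8Aux.factorial_sum_le (Finset.univ : Finset (Fin d)) α
    rw [Finset.card_univ, Fintype.card_fin] at this
    exact_mod_cast this
  have hB0 : (0:ℝ) ≤ B x₀ := le_trans zero_le_one (hB x₀ (htK x₀ hx₀t))
  have hMB : B x₀ ≤ M := hBM x₀ hx₀t
  have hM0 : (0:ℝ) ≤ M := le_trans zero_le_one hM1
  calc B x₀ ^ (k + 1) * (k)!
      ≤ M ^ (k + 1) * (k)! := by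
        refine mul_le_mul_of_nonneg_right (pow_le_pow_left₀ hB0 hMB _) (by positivity)
    _ ≤ M ^ (k + 1) * ((d:ℝ) ^ k * ∏ i, ((α i)! : ℝ)) := by
        refine mul_le_mul_of_nonneg_left hfact (by positivity)
    _ ≤ M ^ (k + 1) * (((d:ℝ) + 1) ^ (k + 1) * ∏ i, ((α i)! : ℝ)) := by
        refine mul_le_mul_of_nonneg_left (mul_le_mul_of_nonneg_right ?_ ?_) (by positivity)
        · calc (d:ℝ) ^ k ≤ ((d:ℝ) + 1) ^ k :=
              pow_le_pow_left₀ (by positivity) (by linarith) _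
            _ ≤ ((d:ℝ) + 1) ^ (k + 1) := by
              refine pow_le_pow_right₀ (by linarith [Nat.cast_nonneg (α := ℝ) d]) (by omega)
        · positivity
    _ = ((d + 1) * M) ^ (k + 1) * ∏ i, ((α i)! : ℝ) := by
        rw [mul_pow]; push_cast; ring
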